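/- Let m, n ≥ 1 be integers with mn not a perfect square. Let Λ ⊆ ℂ² be the lattice spanned over ℤ by the columns of [[1, 1+√(-n), √(-m), √(-m)(1+√(-n))],[1, √(-n), -√(-m), -√(-m)√(-n)]]. Then End(Λ) = ℤ + ℤI + ℤJ + ℤK where I = diag(√(-m), -√(-m)), J = [[0, 1+2√(-n)],[-1+2√(-n), 0]], K = IJ, and these satisfy I² = -m, J² = -1-4n, IJ = -JI. -/

import Mathlib

open Matrix Complex


open Complex in
lemma indep_aux (m n : ℕ) (hm : 1 ≤ m) (hn : 1 ≤ n)
    (hns : ¬ ∃ k : ℤ, k ^ 2 = (m : ℤ) * n)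
    (a b c d : ℤ)
    (h : (a:ℂ) + b * (Complex.I * (Real.sqrt m : ℂ)) + c * (Complex.I * (Real.sqrt n : ℂ))
      + d * ((Complex.I * (Real.sqrt m : ℂ)) * (Complex.I * (Real.sqrt n : ℂ))) = 0) :
    a = 0 ∧ b = 0 ∧ c = 0 ∧ d = 0 := by
  set μ : ℝ := Real.sqrt m with hμdef
  set ν : ℝ := Real.sqrt n with hνdef
  have hμ2 : μ^2 = m := Real.sq_sqrt (by positivity)
  have hν2 : ν^2 = n := Real.sq_sqrt (by positivity)
  have hν0 : 0 < ν := Real.sqrt_pos.mpr (by exact_mod_cast hn)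
  have hμ0 : 0 < μ := Real.sqrt_pos.mpr (by exact_mod_cast hm)
  have hirr : Irrational (μ * ν) := by
    have : μ * ν = Real.sqrt ((m*n : ℕ) : ℝ) := by
      rw [hμdef, hνdef, ← Real.sqrt_mul (by positivity)]
      norm_num
    rw [this]
    refine irrational_sqrt_natCast_iff.mpr ?_
    rintro ⟨r, hr⟩
    exact hns ⟨r, by rw [← Nat.cast_mul, hr]; push_cast; ring⟩
  have hre : (a:ℝ) - d * (μ * ν) = 0 := by
    have := congrArg Complex.re h
    simp at this; linarith
  have him : (b:ℝ) * μ + c * ν = 0 := by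
    have := congrArg Complex.im h
    simpa using this
  have hd : d = 0 := by
    by_contra hd
    apply hirr
    refine ⟨(a : ℚ) / (d : ℚ), ?_⟩
    have hd' : (d:ℝ) ≠ 0 := by exact_mod_cast hd
    push_cast
    field_simp
    linarith [hre]
  have ha : a = 0 := by
    have : (a:ℝ) = 0 := by rw [hd] at hre; simpa using hre
    exact_mod_cast this
  have hb : b = 0 := by
    by_contra hb
    apply hirr
    refine ⟨-((c : ℚ) * n) / (b : ℚ), ?_⟩
    have hb' : (b:ℝ) ≠ 0 := by exact_mod_cast hb
    have key : (b:ℝ) * (μ * ν) = -(c * n) := by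
      have h2 := congrArg (· * ν) him
      simp only [add_mul, zero_mul, mul_assoc] at h2
      have h3 : ν * ν = (n:ℝ) := by rw [← pow_two]; exact hν2
      rw [h3] at h2
      linarith
    push_cast
    field_simp
    linarith [key]
  have hc : c = 0 := by
    have : (c:ℝ) * ν = 0 := by rw [hb] at him; simpa using him
    rcases mul_eq_zero.mp this with h' | h'
    · exact_mod_cast h'
    · linarith
  exact ⟨ha, hb, hc, hd⟩

lemma mem_closure_four {G : Type*} [AddCommGroup G] (x₁ x₂ x₃ x₄ v : G) :
    v ∈ AddSubgroup.closure {x₁, x₂, x₃, x₄} ↔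
      ∃ a b c d : ℤ, v = a • x₁ + b • x₂ + c • x₃ + d • x₄ := by
  constructor
  · intro hv
    induction hv using AddSubgroup.closure_induction with
    | mem x hx =>
      rcases hx with h | h | h | h
      · exact ⟨1, 0, 0, 0, by simp [h]⟩
      · exact ⟨0, 1, 0, 0, by simp [h]⟩
      · exact ⟨0, 0, 1, 0, by simp [h]⟩
      · exact ⟨0, 0, 0, 1, by simp [Set.mem_singleton_iff.mp h]⟩
    | zero => exact ⟨0, 0, 0, 0, by simp⟩
    | add x y _ _ hx hy =>
      obtain ⟨a, b, c, d, rfl⟩ := hx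
      obtain ⟨a', b', c', d', rfl⟩ := hy
      exact ⟨a + a', b + b', c + c', d + d', by simp [add_zsmul]; abel⟩
    | neg x _ hx =>
      obtain ⟨a, b, c, d, rfl⟩ := hx
      exact ⟨-a, -b, -c, -d, by simp [neg_zsmul]; abel⟩
  · rintro ⟨a, b, c, d, rfl⟩
    have h₁ : x₁ ∈ AddSubgroup.closure {x₁, x₂, x₃, x₄} := AddSubgroup.subset_closure (by simp)
    have h₂ : x₂ ∈ AddSubgroup.closure {x₁, x₂, x₃, x₄} := AddSubgroup.subset_closure (by simp)
    have h₃ : x₃ ∈ AddSubgroup.closure {x₁, x₂, x₃, x₄} := AddSubgroup.subset_closure (by simp)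
    have h₄ : x₄ ∈ AddSubgroup.closure {x₁, x₂, x₃, x₄} := AddSubgroup.subset_closure (by simp)
    exact AddSubgroup.add_mem _ (AddSubgroup.add_mem _ (AddSubgroup.add_mem _
      (AddSubgroup.zsmul_mem _ h₁ a) (AddSubgroup.zsmul_mem _ h₂ b))
      (AddSubgroup.zsmul_mem _ h₃ c)) (AddSubgroup.zsmul_mem _ h₄ d)


/-- for `m, n ≥ 1` with `mn` not a perfect square, the
endomorphism ring of the lattice spanned by the columns of
`[[1, 1+√-n, √-m, √-m(1+√-n)],[1, √-n, -√-m, -√-m√-n]]` is the order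
`ℤ + ℤI + ℤJ + ℤK` with `I = diag(√-m,-√-m)`, `J = [[0,1+2√-n],[-1+2√-n,0]]`,
`K = IJ`, and `I² = -m`, `J² = -1-4n`, `IJ = -JI`. -/
theorem stmt_17 (m n : ℕ) (hm : 1 ≤ m) (hn : 1 ≤ n)
    (hns : ¬ ∃ k : ℤ, k ^ 2 = (m : ℤ) * n)
    (sm sn : ℂ) (hsm : sm = Complex.I * (Real.sqrt m : ℂ))
    (hsn : sn = Complex.I * (Real.sqrt n : ℂ))
    (Λ : AddSubgroup (Fin 2 → ℂ))
    (hΛ : Λ = AddSubgroup.closure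
      {![1, 1], ![1 + sn, sn], ![sm, -sm], ![sm * (1 + sn), -sm * sn]})
    (I J : Matrix (Fin 2) (Fin 2) ℂ)
    (hI : I = !![sm, 0; 0, -sm])
    (hJ : J = !![0, 1 + 2 * sn; -1 + 2 * sn, 0]) :
    I ^ 2 = -(m : ℂ) • (1 : Matrix (Fin 2) (Fin 2) ℂ) ∧
    J ^ 2 = -(1 + 4 * (n : ℂ)) • (1 : Matrix (Fin 2) (Fin 2) ℂ) ∧
    I * J = -(J * I) ∧
    {T : Matrix (Fin 2) (Fin 2) ℂ | ∀ v ∈ Λ, T.mulVec v ∈ Λ} =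
      {T | ∃ n₀ n₁ n₂ n₃ : ℤ,
        T = n₀ • (1 : Matrix (Fin 2) (Fin 2) ℂ) + n₁ • I + n₂ • J + n₃ • (I * J)} := by
  have he : sm^2 = -(m:ℂ) := by
    have h1 : (Real.sqrt m)^2 = (m:ℝ) := Real.sq_sqrt (by positivity)
    have h2 : ((Real.sqrt m : ℝ):ℂ)^2 = ((m:ℕ):ℂ) := by exact_mod_cast congrArg (fun x:ℝ => (x:ℂ)) h1
    rw [hsm]; linear_combination ((Real.sqrt m : ℝ):ℂ)^2 * Complex.I_sq - h2
  have hf : sn^2 = -(n:ℂ) := by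
    have h1 : (Real.sqrt n)^2 = (n:ℝ) := Real.sq_sqrt (by positivity)
    have h2 : ((Real.sqrt n : ℝ):ℂ)^2 = ((n:ℕ):ℂ) := by exact_mod_cast congrArg (fun x:ℝ => (x:ℂ)) h1
    rw [hsn]; linear_combination ((Real.sqrt n : ℝ):ℂ)^2 * Complex.I_sq - h2
  have hsm0 : sm ≠ 0 := by
    intro h0
    have : ((m:ℕ):ℂ) = 0 := by rw [← neg_eq_zero, ← he, h0]; ring
    have : m = 0 := by exact_mod_cast this
    omega
  subst hΛ
  set w₁ : Fin 2 → ℂ := ![1, 1] with hw1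
  set w₂ : Fin 2 → ℂ := ![1 + sn, sn] with hw2
  set w₃ : Fin 2 → ℂ := ![sm, -sm] with hw3
  set w₄ : Fin 2 → ℂ := ![sm * (1 + sn), -sm * sn] with hw4
  -- basic identities
  have hIw1 : I.mulVec w₁ = w₃ := by
    rw [hI, hw1, hw3]; funext i; fin_cases i <;>
      simp [Matrix.mulVec, dotProduct, Fin.sum_univ_two]
  have hIw2 : I.mulVec w₂ = w₄ := by
    rw [hI, hw2, hw4]; funext i; fin_cases i <;>
      simp [Matrix.mulVec, dotProduct, Fin.sum_univ_two]
  have hIw3 : I.mulVec w₃ = (-(m:ℂ)) • w₁ := by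
    rw [hI, hw1, hw3]; funext i; fin_cases i <;>
      simp [Matrix.mulVec, dotProduct, Fin.sum_univ_two] <;>
      linear_combination he
  have hIw4 : I.mulVec w₄ = (-(m:ℂ)) • w₂ := by
    rw [hI, hw2, hw4]; funext i; fin_cases i
    · simp [Matrix.mulVec, dotProduct, Fin.sum_univ_two]
      linear_combination (1+sn)*he
    · simp [Matrix.mulVec, dotProduct, Fin.sum_univ_two]
      linear_combination sn*he
  have hJw1 : J.mulVec w₁ = (-1:ℂ) • w₁ + (2:ℂ) • w₂ := by
    rw [hJ, hw1, hw2]; funext i; fin_cases i <;>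
      simp [Matrix.mulVec, dotProduct, Fin.sum_univ_two] <;> ring
  have hJw2 : J.mulVec w₂ = (-(2*(n:ℂ)+1)) • w₁ + w₂ := by
    rw [hJ, hw1, hw2]; funext i; fin_cases i <;>
      simp [Matrix.mulVec, dotProduct, Fin.sum_univ_two] <;>
      linear_combination 2*hf
  have hJw3 : J.mulVec w₃ = w₃ + (-2:ℂ) • w₄ := by
    rw [hJ, hw3, hw4]; funext i; fin_cases i <;>
      simp [Matrix.mulVec, dotProduct, Fin.sum_univ_two] <;> ring
  have hJw4 : J.mulVec w₄ = (2*(n:ℂ)+1) • w₃ + (-1:ℂ) • w₄ := by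
    rw [hJ, hw3, hw4]; funext i; fin_cases i
    · simp [Matrix.mulVec, dotProduct, Fin.sum_univ_two]
      linear_combination (-2*sm)*hf
    · simp [Matrix.mulVec, dotProduct, Fin.sum_univ_two]
      linear_combination 2*sm*hf
  -- general expansion
  have hexp : ∀ (p q r s : ℤ) (v : Fin 2 → ℂ),
      (p • (1:Matrix (Fin 2) (Fin 2) ℂ) + q • I + r • J + s • (I*J)).mulVec v
      = (p:ℂ) • v + (q:ℂ) • I.mulVec v + (r:ℂ) • J.mulVec v
        + (s:ℂ) • (I.mulVec (J.mulVec v)) := by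
    intro p q r s v
    rw [Matrix.add_mulVec, Matrix.add_mulVec, Matrix.add_mulVec,
      ← Int.cast_smul_eq_zsmul ℂ p, ← Int.cast_smul_eq_zsmul ℂ q,
      ← Int.cast_smul_eq_zsmul ℂ r, ← Int.cast_smul_eq_zsmul ℂ s,
      Matrix.smul_mulVec, Matrix.smul_mulVec,
      Matrix.smul_mulVec, Matrix.smul_mulVec,
      Matrix.one_mulVec, Matrix.mulVec_mulVec]
  have hT1 : ∀ (p q r s : ℤ),
      (p • (1:Matrix (Fin 2) (Fin 2) ℂ) + q • I + r • J + s • (I*J)).mulVec w₁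
      = ((p:ℂ) - r) • w₁ + (2*(r:ℂ)) • w₂ + ((q:ℂ) - s) • w₃ + (2*(s:ℂ)) • w₄ := by
    intro p q r s
    rw [hexp, hJw1, Matrix.mulVec_add, Matrix.mulVec_smul, Matrix.mulVec_smul,
      hIw1, hIw2]
    module
  have hT2 : ∀ (p q r s : ℤ),
      (p • (1:Matrix (Fin 2) (Fin 2) ℂ) + q • I + r • J + s • (I*J)).mulVec w₂
      = (-(2*(n:ℂ)+1)*(r:ℂ)) • w₁ + ((p:ℂ) + r) • w₂
        + (-(2*(n:ℂ)+1)*(s:ℂ)) • w₃ + ((q:ℂ) + s) • w₄ := by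
    intro p q r s
    rw [hexp, hJw2, Matrix.mulVec_add, Matrix.mulVec_smul, hIw1, hIw2]
    module
  have hT3 : ∀ (p q r s : ℤ),
      (p • (1:Matrix (Fin 2) (Fin 2) ℂ) + q • I + r • J + s • (I*J)).mulVec w₃
      = (-(m:ℂ)*((q:ℂ) + s)) • w₁ + (2*(m:ℂ)*(s:ℂ)) • w₂
        + ((p:ℂ) + r) • w₃ + (-2*(r:ℂ)) • w₄ := by
    intro p q r s
    rw [hexp, hJw3, Matrix.mulVec_add, Matrix.mulVec_smul, hIw3, hIw4]
    module
  have hT4 : ∀ (p q r s : ℤ),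
      (p • (1:Matrix (Fin 2) (Fin 2) ℂ) + q • I + r • J + s • (I*J)).mulVec w₄
      = (-(2*(n:ℂ)+1)*(m:ℂ)*(s:ℂ)) • w₁ + ((m:ℂ)*((s:ℂ) - q)) • w₂
        + ((2*(n:ℂ)+1)*(r:ℂ)) • w₃ + ((p:ℂ) - r) • w₄ := by
    intro p q r s
    rw [hexp, hJw4, Matrix.mulVec_add, Matrix.mulVec_smul, Matrix.mulVec_smul,
      hIw3, hIw4]
    module
  -- basis property
  have hbasis : ∀ S : Matrix (Fin 2) (Fin 2) ℂ,
      S.mulVec w₁ = 0 → S.mulVec w₃ = 0 → S = 0 := by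
    intro S h1 h3
    have hw3smul : w₃ = sm • ![(1:ℂ), -1] := by
      rw [hw3]; funext i; fin_cases i <;> simp
    rw [hw3smul, Matrix.mulVec_smul] at h3
    have h3' : S.mulVec ![(1:ℂ), -1] = 0 := by
      rcases smul_eq_zero.mp h3 with h | h
      · exact absurd h hsm0
      · exact h
    rw [hw1] at h1
    have k1 : S.mulVec ![(1:ℂ), 0] = 0 := by
      have e1 : ((2:ℂ) • ![(1:ℂ), 0]) = ![(1:ℂ), 1] + ![(1:ℂ), -1] := by
        funext i; fin_cases i <;> simp <;> norm_num
      have e2 : S.mulVec ((2:ℂ) • ![(1:ℂ), 0]) = 0 := by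
        rw [e1, Matrix.mulVec_add, h1, h3']; simp
      rw [Matrix.mulVec_smul] at e2
      rcases smul_eq_zero.mp e2 with h | h
      · norm_num at h
      · exact h
    have k2 : S.mulVec ![(0:ℂ), 1] = 0 := by
      have e1 : ((2:ℂ) • ![(0:ℂ), 1]) = ![(1:ℂ), 1] + (-1:ℂ) • ![(1:ℂ), -1] := by
        funext i; fin_cases i <;> simp <;> norm_num
      have e2 : S.mulVec ((2:ℂ) • ![(0:ℂ), 1]) = 0 := by
        rw [e1, Matrix.mulVec_add, Matrix.mulVec_smul, h1, h3']; simp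
      rw [Matrix.mulVec_smul] at e2
      rcases smul_eq_zero.mp e2 with h | h
      · norm_num at h
      · exact h
    ext i j
    fin_cases i <;> fin_cases j
    · simpa [Matrix.mulVec, dotProduct, Fin.sum_univ_two] using congrFun k1 0
    · simpa [Matrix.mulVec, dotProduct, Fin.sum_univ_two] using congrFun k2 0
    · simpa [Matrix.mulVec, dotProduct, Fin.sum_univ_two] using congrFun k1 1
    · simpa [Matrix.mulVec, dotProduct, Fin.sum_univ_two] using congrFun k2 1
  refine ⟨?_, ?_, ?_, ?_⟩
  · rw [hI, pow_two]
    ext i j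
    fin_cases i <;> fin_cases j <;>
      simp [Matrix.mul_apply, Fin.sum_univ_two, Matrix.one_apply] <;>
      linear_combination he
  · rw [hJ, pow_two]
    ext i j
    fin_cases i <;> fin_cases j <;>
      simp [Matrix.mul_apply, Fin.sum_univ_two, Matrix.one_apply] <;>
      linear_combination 4*hf
  · rw [hI, hJ]
    ext i j
    fin_cases i <;> fin_cases j <;>
      simp [Matrix.mul_apply, Fin.sum_univ_two] <;> ring
  · ext T
    simp only [Set.mem_setOf_eq]
    constructor
    · intro hT
      have hw₁mem : w₁ ∈ AddSubgroup.closure {w₁, w₂, w₃, w₄} :=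
        AddSubgroup.subset_closure (by simp)
      have hw₂mem : w₂ ∈ AddSubgroup.closure {w₁, w₂, w₃, w₄} :=
        AddSubgroup.subset_closure (by simp)
      have hw₃mem : w₃ ∈ AddSubgroup.closure {w₁, w₂, w₃, w₄} :=
        AddSubgroup.subset_closure (by simp)
      obtain ⟨a1, a2, a3, a4, ha⟩ := (mem_closure_four w₁ w₂ w₃ w₄ _).mp (hT w₁ hw₁mem)
      obtain ⟨b1, b2, b3, b4, hb⟩ := (mem_closure_four w₁ w₂ w₃ w₄ _).mp (hT w₂ hw₂mem)
      obtain ⟨c1, c2, c3, c4, hc⟩ := (mem_closure_four w₁ w₂ w₃ w₄ _).mp (hT w₃ hw₃mem)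
      simp only [← Int.cast_smul_eq_zsmul ℂ] at ha hb hc
      have hrel : (2*sm) • w₂ = (sm + 2*(sm*sn)) • w₁ + w₃ := by
        rw [hw1, hw2, hw3]; funext i; fin_cases i <;> simp <;> ring
      have E1 : (2*sm) • T.mulVec w₂ = (sm + 2*(sm*sn)) • T.mulVec w₁ + T.mulVec w₃ := by
        have h0 : T.mulVec ((2*sm) • w₂) = T.mulVec ((sm + 2*(sm*sn)) • w₁ + w₃) := by
          rw [hrel]
        rwa [Matrix.mulVec_smul, Matrix.mulVec_add, Matrix.mulVec_smul] at h0
      rw [ha, hb, hc] at E1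
      have raw0 := congrFun E1 0
      have raw1 := congrFun E1 1
      simp only [hw1, hw2, hw3, hw4, Pi.add_apply, Pi.smul_apply, smul_eq_mul,
        Matrix.cons_val_zero, Matrix.cons_val_one, Matrix.head_cons] at raw0 raw1
      have q0 := indep_aux m n hm hn hns
        (-c2 - c1 - 2*(m:ℤ)*b4 - 2*(m:ℤ)*b3 + (m:ℤ)*a4 + (m:ℤ)*a3 - 2*(m:ℤ)*(n:ℤ)*a4)
        (-c4 - c3 + 2*b2 + 2*b1 - a2 - a1 + 2*(n:ℤ)*a2)
        (-c2 - 2*(m:ℤ)*b4 + 3*(m:ℤ)*a4 + 2*(m:ℤ)*a3)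
        (-c4 + 2*b2 - 3*a2 - 2*a1)
        (by rw [← hsm, ← hsn]; push_cast;
            linear_combination raw0
              - (2*(b4:ℂ) + 2*(b3:ℂ) - (a4:ℂ) - (a3:ℂ)
                 + (2*(b4:ℂ) - 3*(a4:ℂ) - 2*(a3:ℂ))*sn - 2*(a4:ℂ)*sn^2) * he
              - (2*(m:ℂ)*(a4:ℂ) - 2*sm*(a2:ℂ)) * hf)
      have q1 := indep_aux m n hm hn hns
        (-c1 + 2*(m:ℤ)*b3 - (m:ℤ)*a3 + 2*(m:ℤ)*(n:ℤ)*a4)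
        (c3 + 2*b1 - a1 + 2*(n:ℤ)*a2)
        (-c2 + 2*(m:ℤ)*b4 - (m:ℤ)*a4 - 2*(m:ℤ)*a3)
        (c4 + 2*b2 - a2 - 2*a1)
        (by rw [← hsm, ← hsn]; push_cast;
            linear_combination raw1
              - (-2*(b3:ℂ) + (a3:ℂ) + (-2*(b4:ℂ) + (a4:ℂ) + 2*(a3:ℂ))*sn
                 + 2*(a4:ℂ)*sn^2) * he
              - (-2*(m:ℂ)*(a4:ℂ) - 2*sm*(a2:ℂ)) * hf)
      obtain ⟨A1, A2, A3, A4⟩ := q0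
      obtain ⟨B1, B2, B3, B4⟩ := q1
      have hmne : (m:ℤ) ≠ 0 := by
        have : m ≠ 0 := by omega
        exact_mod_cast this
      have hc4v : c4 = -a2 := by linarith
      have hb2v : b2 = a1 + a2 := by linarith
      have hc3v : c3 = a1 + a2 := by linarith
      have hc2v : c2 = (m:ℤ)*a4 := by linarith
      have hb4m : (m:ℤ)*b4 = (m:ℤ)*(a3+a4) := by linarith
      have hb4v : b4 = a3 + a4 := mul_left_cancel₀ hmne hb4m
      have hc1m : c1 = -((m:ℤ)*b4) := by linarith
      have hc1v : c1 = -((m:ℤ)*(a3+a4)) := by rw [hc1m, hb4v]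
      obtain ⟨n2, ha2⟩ : ∃ t : ℤ, a2 = 2*t := ⟨-b1 - (n:ℤ)*a2, by linarith⟩
      have hMz : (m:ℤ)*(a4 + 2*b3 + 2*(n:ℤ)*a4) = 0 := by linarith
      obtain ⟨n3, ha4⟩ : ∃ t : ℤ, a4 = 2*t := by
        rcases mul_eq_zero.mp hMz with h | h
        · exact absurd h hmne
        · exact ⟨-b3 - (n:ℤ)*a4, by linarith⟩
      refine ⟨a1 + n2, a3 + n3, n2, n3, ?_⟩
      have h0 : T - ((a1 + n2) • (1:Matrix (Fin 2) (Fin 2) ℂ) + (a3 + n3) • I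
          + n2 • J + n3 • (I*J)) = 0 := by
        apply hbasis
        · rw [Matrix.sub_mulVec, hT1, ha]
          push_cast [ha2, ha4]
          module
        · rw [Matrix.sub_mulVec, hT3, hc]
          push_cast [hc1v, hc2v, hc3v, hc4v, ha2, ha4]
          module
      exact sub_eq_zero.mp h0
    · rintro ⟨p, q, r, s, rfl⟩
      intro v hv
      obtain ⟨x1, x2, x3, x4, rfl⟩ := (mem_closure_four w₁ w₂ w₃ w₄ v).mp hv
      refine (mem_closure_four w₁ w₂ w₃ w₄ _).mpr
        ⟨x1*(p-r) + x2*(-(2*(n:ℤ)+1)*r) + x3*(-(m:ℤ)*(q+s)) + x4*(-(2*(n:ℤ)+1)*(m:ℤ)*s),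
         x1*(2*r) + x2*(p+r) + x3*(2*(m:ℤ)*s) + x4*((m:ℤ)*(s-q)),
         x1*(q-s) + x2*(-(2*(n:ℤ)+1)*s) + x3*(p+r) + x4*((2*(n:ℤ)+1)*r),
         x1*(2*s) + x2*(q+s) + x3*(-2*r) + x4*(p-r), ?_⟩
      have hv' : x1 • w₁ + x2 • w₂ + x3 • w₃ + x4 • w₄
          = (x1:ℂ) • w₁ + (x2:ℂ) • w₂ + (x3:ℂ) • w₃ + (x4:ℂ) • w₄ := by
        simp only [Int.cast_smul_eq_zsmul]
      rw [hv', Matrix.mulVec_add, Matrix.mulVec_add, Matrix.mulVec_add,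
        Matrix.mulVec_smul, Matrix.mulVec_smul, Matrix.mulVec_smul, Matrix.mulVec_smul,
        hT1 p q r s, hT2 p q r s, hT3 p q r s, hT4 p q r s]
      simp only [← Int.cast_smul_eq_zsmul ℂ]
      push_cast
      module
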